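/- Well-formedness of P\ℋ: if H̄₁ and H̄₂ are two high level PEPA components neither of which shares any action type with any derivative of P (i.e., for all P' ∈ ds(P), 𝒜(P') ∩ 𝒜(H̄ᵢ) = ∅ for i = 1,2), then the derivation graphs of P ⊲⊳_ℋ H̄₁ and P ⊲⊳_ℋ H̄₂ are isomorphic (there is a bijection between their derivative sets preserving transitions together with their action types and rates). -/

import Mathlib

open scoped ENNReal Classical

/-- Action types: a countable set with a distinguished silent type `tau`. -/
inductive Act : Type where
  | tau : Act
  | vis : ℕ → Act
deriving DecidableEq

/-- PEPA components: prefix `(α,r).P`, choice `P+Q`, cooperation `P ⊲⊳_L Q`,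
hiding `P/L`, and constants `A` (given by an environment of defining equations).
Rates live in `ℝ≥0∞` (positive reals together with the unspecified symbol `⊤`). -/
inductive Proc : Type where
  | pre : Act → ℝ≥0∞ → Proc → Proc
  | choice : Proc → Proc → Proc
  | coop : Proc → Set Act → Proc → Proc
  | hide : Proc → Set Act → Proc
  | const : ℕ → Proc

namespace PEPA

/-- Fuelled conditional transition rate `qF E n P α P'`: the total rate
(with multiplicities) of the `α`-transitions from `P` to `P'` in the
multi-transition system given by the operational semantics of Table 1,
computed with `n` units of fuel for unfolding constants.
The shared-activity (cooperation) rule uses the apparent rates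
`r_α(P) = ∑' X, qF E n P α X` as in
`R = (r₁/r_α(P)) · (r₂/r_α(Q)) · min(r_α(P), r_α(Q))`. -/
noncomputable def qF (E : ℕ → Proc) : ℕ → Proc → Act → Proc → ℝ≥0∞
  | 0, _, _, _ => 0
  | n+1, .pre β r P, α, X => if β = α ∧ X = P then r else 0
  | n+1, .choice P Q, α, X => qF E n P α X + qF E n Q α X
  | n+1, .hide P L, α, X =>
      match X with
      | .hide P' L' =>
          if L' = L then
            if α = .tau then qF E n P .tau P' + ∑' β : L, qF E n P β P'
            else if α ∈ L then 0 else qF E n P α P'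
          else 0
      | _ => 0
  | n+1, .coop P L Q, α, X =>
      match X with
      | .coop P' L' Q' =>
          if L' = L then
            if α ∈ L then
              (qF E n P α P' / ∑' Y, qF E n P α Y) * (qF E n Q α Q' / ∑' Y, qF E n Q α Y)
                * min (∑' Y, qF E n P α Y) (∑' Y, qF E n Q α Y)
            else
              (if Q' = Q then qF E n P α P' else 0) + (if P' = P then qF E n Q α Q' else 0)
          else 0
      | _ => 0
  | n+1, .const c, α, X => qF E n (E c) α X

/-- `q E P α P'` : the (total) conditional transition rate from `P` to `P'`
via action type `α`, i.e. the sum of the rates over all transitions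
`P --(α,r)--> P'` of the multi-transition system. -/
noncomputable def q (E : ℕ → Proc) (P : Proc) (α : Act) (P' : Proc) : ℝ≥0∞ :=
  ⨆ n, qF E n P α P'

/-- Total conditional transition rate `q[P,S,α] = Σ_{P'∈S} q(P,P',α)`. -/
noncomputable def qTo (E : ℕ → Proc) (P : Proc) (S : Set Proc) (α : Act) : ℝ≥0∞ :=
  ∑' P' : S, q E P α P'

/-- One step of the derivation graph: `P` has some transition to `P'`. -/
def Step (E : ℕ → Proc) (P P' : Proc) : Prop := ∃ α, q E P α P' ≠ 0

/-- The derivative set `ds(P)`: the set of states reachable from `P`. -/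
def ds (E : ℕ → Proc) (P : Proc) : Set Proc :=
  {P' | Relation.ReflTransGen (Step E) P P'}

/-- `𝒜(P)`: the set of current action types of `P`. -/
def curTypes (E : ℕ → Proc) (P : Proc) : Set Act :=
  {α | ∃ P', q E P α P' ≠ 0}

/-- The set of equivalence classes `𝒞/ℛ` of a relation `ℛ`. -/
def eqCls (R : Proc → Proc → Prop) : Set (Set Proc) :=
  {S | ∃ P, S = {Q | R P Q}}

/-- A lumpable bisimulation: an equivalence relation `R` such that whenever
`R P Q`, then for all `α` and all classes `S` of `R` with either `α ≠ τ`, or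
`α = τ` and `P,Q ∉ S`, it holds that `q[P,S,α] = q[Q,S,α]`. -/
def IsLumpBisim (E : ℕ → Proc) (R : Proc → Proc → Prop) : Prop :=
  Equivalence R ∧
    ∀ P Q, R P Q → ∀ α, ∀ S ∈ eqCls R,
      (α ≠ Act.tau ∨ (P ∉ S ∧ Q ∉ S)) → qTo E P S α = qTo E Q S α

/-- Lumpable bisimilarity `≈_l`: the union of all lumpable bisimulations. -/
def lb (E : ℕ → Proc) (P Q : Proc) : Prop :=
  ∃ R, IsLumpBisim E R ∧ R P Q

section High

-- `Hs` is the set `ℋ` of high action types (the remaining visible types are low).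
variable (E : ℕ → Proc) (Hs : Set Act)

/-- A high level component: every derivative may next engage in high types only. -/
def IsHighComp (Hc : Proc) : Prop := ∀ H' ∈ ds E Hc, curTypes E H' ⊆ Hs

/-- The set `ℒ` of low action types. -/
def Low : Set Act := {α | α ∉ Hs ∧ α ≠ Act.tau}

/-- An inert component: a high level component performing no activity at all
(hence sharing no action type with any component). -/
def inert : Proc := .pre .tau 0 (.const 0)

/-- `P \ ℋ` : `P ⊲⊳_ℋ H̄` where `H̄` is a high level component that does not
cooperate with `P` (it shares no action types with the derivatives of `P`). -/
def restr (P : Proc) : Proc := .coop P Hs inert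

/-- The high context `C[_] = (_ ⊲⊳_ℋ Hc)/ℋ` applied to `P`. -/
def hctx (Hc P : Proc) : Proc := .hide (.coop P Hs Hc) Hs

/-- Stochastic Non-Interference: `P\ℋ ≈_l (P ⊲⊳_ℋ H)/ℋ` for every high `H`. -/
def SNI (P : Proc) : Prop :=
  ∀ Hc, IsHighComp E Hs Hc → lb E (restr Hs P) (hctx Hs Hc P)

/-- Persistent Stochastic Non-Interference: every derivative of `P` satisfies SNI. -/
def PSNI (P : Proc) : Prop := ∀ P' ∈ ds E P, SNI E Hs P'

/-- `q_C(P,P',α)`: the sum of the rates over all transitions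
`C[P] --(α,r)--> C'[P']` (with `C'[_]` ranging over high contexts). -/
noncomputable def qC (Hc P : Proc) (α : Act) (P' : Proc) : ℝ≥0∞ :=
  ∑' Hc' : Proc, q E (hctx Hs Hc P) α (hctx Hs Hc' P')

/-- `q_C[P,S,α] = Σ_{P'∈S} q_C(P,P',α)`. -/
noncomputable def qCTo (Hc P : Proc) (S : Set Proc) (α : Act) : ℝ≥0∞ :=
  ∑' P' : S, qC E Hs Hc P α P'

/-- A lumpable bisimulation on high contexts. -/
def IsLumpBisimHC (R : Proc → Proc → Prop) : Prop :=
  Equivalence R ∧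
    ∀ P Q, R P Q → ∀ Hc, IsHighComp E Hs Hc → ∀ α, ∀ S ∈ eqCls R,
      (α ≠ Act.tau ∨ (P ∉ S ∧ Q ∉ S)) →
        qCTo E Hs Hc P S α = qCTo E Hs Hc Q S α

/-- Lumpable bisimilarity on high contexts `≈_l^hc`. -/
def lbhc (P Q : Proc) : Prop := ∃ R, IsLumpBisimHC E Hs R ∧ R P Q

/-- A lumpable bisimulation up to `ℋ`. -/
def IsLumpBisimUpto (R : Proc → Proc → Prop) : Prop :=
  Equivalence R ∧
    ∀ P Q, R P Q → ∀ α, ∀ S ∈ eqCls R,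
      ((α ∉ Hs ∧ α ≠ Act.tau) → qTo E P S α = qTo E Q S α) ∧
      ((α ∈ Hs ∨ α = Act.tau) → P ∉ S → Q ∉ S → qTo E P S α = qTo E Q S α)

/-- Lumpable bisimilarity up to `ℋ`, written `≈_l^ℋ`. -/
def lbUpto (P Q : Proc) : Prop := ∃ R, IsLumpBisimUpto E Hs R ∧ R P Q

end High

end PEPA

namespace PEPA

lemma qF_coop_coop (E : ℕ → Proc) (n : ℕ) (P : Proc) (L : Set Act) (Q : Proc)
    (α : Act) (X1 : Proc) (L' : Set Act) (X2 : Proc) :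
    qF E (n+1) (.coop P L Q) α (.coop X1 L' X2) =
      if L' = L then
        if α ∈ L then
          (qF E n P α X1 / ∑' Y, qF E n P α Y) * (qF E n Q α X2 / ∑' Y, qF E n Q α Y)
            * min (∑' Y, qF E n P α Y) (∑' Y, qF E n Q α Y)
        else
          (if X2 = Q then qF E n P α X1 else 0) + (if X1 = P then qF E n Q α X2 else 0)
      else 0 := by
  simp [qF]

lemma qF_coop_pre (E n P L Q α β r X) : qF E (n+1) (.coop P L Q) α (.pre β r X) = 0 := by simp [qF]
lemma qF_coop_choice (E n P L Q α X Y) : qF E (n+1) (.coop P L Q) α (.choice X Y) = 0 := by simp [qF]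
lemma qF_coop_hide (E n P L Q α X M) : qF E (n+1) (.coop P L Q) α (.hide X M) = 0 := by simp [qF]
lemma qF_coop_const (E n P L Q α c) : qF E (n+1) (.coop P L Q) α (.const c) = 0 := by simp [qF]

lemma qF_eq_zero_of_not_cur {E : ℕ → Proc} {P : Proc} {α : Act}
    (h : α ∉ curTypes E P) (n : ℕ) (X : Proc) : qF E n P α X = 0 := by
  have hq : q E P α X = 0 := by
    by_contra hc; exact h ⟨X, hc⟩
  have : (⨆ m, qF E m P α X) = 0 := hq
  exact ENNReal.iSup_eq_zero.mp this n

lemma q_eq_iSup_succ (E : ℕ → Proc) (P : Proc) (α : Act) (X : Proc) :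
    q E P α X = ⨆ n, qF E (n+1) P α X := by
  refine le_antisymm (iSup_le fun n => ?_) (iSup_le fun n => le_iSup (fun m => qF E m P α X) (n+1))
  cases n with
  | zero => simp [qF]
  | succ m => exact le_iSup (fun k => qF E (k+1) P α X) m

/-- Key lemma: rates out of `P1 ⊲⊳_Hs H` when `H` is high and disjoint from `P1`. -/
lemma q_coop_eq (E : ℕ → Proc) (Hs : Set Act) (P1 H : Proc)
    (hH : curTypes E H ⊆ Hs) (hdisj : curTypes E P1 ∩ curTypes E H = ∅)
    (α : Act) (X1 : Proc) (L' : Set Act) (X2 : Proc) :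
    q E (.coop P1 Hs H) α (.coop X1 L' X2) =
      if L' = Hs ∧ X2 = H ∧ α ∉ Hs then q E P1 α X1 else 0 := by
  have hstep : ∀ n, qF E (n+1) (.coop P1 Hs H) α (.coop X1 L' X2) =
      if L' = Hs ∧ X2 = H ∧ α ∉ Hs then qF E n P1 α X1 else 0 := by
    intro n
    rw [qF_coop_coop]
    by_cases hL : L' = Hs
    · subst hL
      rw [if_pos rfl]
      by_cases hα : α ∈ L'
      · -- shared case: always rate 0
        have h0 : (qF E n P1 α X1 / ∑' Y, qF E n P1 α Y) *
            (qF E n H α X2 / ∑' Y, qF E n H α Y) *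
            min (∑' Y, qF E n P1 α Y) (∑' Y, qF E n H α Y) = 0 := by
          by_cases hc : α ∈ curTypes E H
          · have hnp : α ∉ curTypes E P1 := fun hp =>
              Set.eq_empty_iff_forall_notMem.mp hdisj α ⟨hp, hc⟩
            rw [qF_eq_zero_of_not_cur hnp, ENNReal.zero_div, zero_mul, zero_mul]
          · rw [qF_eq_zero_of_not_cur hc, ENNReal.zero_div, mul_zero, zero_mul]
        rw [if_pos hα, h0, if_neg (fun hc => hc.2.2 hα)]
      · have hH0 : qF E n H α X2 = 0 :=
          qF_eq_zero_of_not_cur (fun hc => hα (hH hc)) n X2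
        rw [if_neg hα, hH0]
        by_cases h2 : X2 = H <;> simp [h2, hα]
    · rw [if_neg hL, if_neg (fun hc => hL hc.1)]
  rw [q_eq_iSup_succ]
  simp only [hstep]
  by_cases hc : L' = Hs ∧ X2 = H ∧ α ∉ Hs
  · simp only [if_pos hc]; rfl
  · simp [if_neg hc]

/-- rates out of the coop to non-coop targets vanish -/
lemma q_coop_ne (E : ℕ → Proc) (Hs : Set Act) (P1 H : Proc) (α : Act) (X : Proc)
    (hX : ∀ X1 L' X2, X ≠ .coop X1 L' X2) : q E (.coop P1 Hs H) α X = 0 := by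
  rw [q_eq_iSup_succ]
  refine ENNReal.iSup_eq_zero.mpr fun n => ?_
  cases X with
  | pre β r Y => exact qF_coop_pre ..
  | choice Y Z => exact qF_coop_choice ..
  | hide Y M => exact qF_coop_hide ..
  | const c => exact qF_coop_const ..
  | coop Y M Z => exact absurd rfl (hX Y M Z)

/-- Low-visible steps of `P` (those that survive in `P ⊲⊳_Hs H`). -/
def LowStep (E : ℕ → Proc) (Hs : Set Act) (a b : Proc) : Prop :=
  ∃ α, α ∉ Hs ∧ q E a α b ≠ 0

lemma lowReach_mem_ds {E : ℕ → Proc} {Hs : Set Act} {P P' : Proc}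
    (h : Relation.ReflTransGen (LowStep E Hs) P P') : P' ∈ ds E P :=
  Relation.ReflTransGen.mono (fun _ _ (hab : LowStep E Hs _ _) => hab.elim fun α hh => ⟨α, hh.2⟩) _ _ h

lemma ds_coop_char (E : ℕ → Proc) (Hs : Set Act) (P H : Proc)
    (hH : curTypes E H ⊆ Hs)
    (hd : ∀ P' ∈ ds E P, curTypes E P' ∩ curTypes E H = ∅) :
    ∀ X ∈ ds E (.coop P Hs H), ∃ P', X = .coop P' Hs H ∧
      Relation.ReflTransGen (LowStep E Hs) P P' := by
  intro X hX
  induction hX with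
  | refl => exact ⟨P, rfl, Relation.ReflTransGen.refl⟩
  | tail _ h2 ih =>
    obtain ⟨P', rfl, hD⟩ := ih
    obtain ⟨α, hq⟩ := h2
    have hdisj := hd P' (lowReach_mem_ds hD)
    rename_i c _
    cases c with
    | coop X1 L' X2 =>
      rw [q_coop_eq E Hs P' H hH hdisj] at hq
      by_cases hcond : L' = Hs ∧ X2 = H ∧ α ∉ Hs
      · obtain ⟨hL, h2H, hα⟩ := hcond
        subst hL; subst h2H
        rw [if_pos ⟨rfl, rfl, hα⟩] at hq
        exact ⟨X1, rfl, hD.tail ⟨α, hα, hq⟩⟩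
      · rw [if_neg hcond] at hq; exact absurd rfl hq
    | pre β r Y => exact absurd (q_coop_ne E Hs P' H α _ (by intro _ _ _ h; cases h)) hq
    | choice Y Z => exact absurd (q_coop_ne E Hs P' H α _ (by intro _ _ _ h; cases h)) hq
    | hide Y M => exact absurd (q_coop_ne E Hs P' H α _ (by intro _ _ _ h; cases h)) hq
    | const c => exact absurd (q_coop_ne E Hs P' H α _ (by intro _ _ _ h; cases h)) hq

lemma mem_ds_coop (E : ℕ → Proc) (Hs : Set Act) (P H : Proc)
    (hH : curTypes E H ⊆ Hs)
    (hd : ∀ P' ∈ ds E P, curTypes E P' ∩ curTypes E H = ∅) :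
    ∀ P', Relation.ReflTransGen (LowStep E Hs) P P' →
      (Proc.coop P' Hs H) ∈ ds E (.coop P Hs H) := by
  intro P' hP'
  induction hP' with
  | refl => exact Relation.ReflTransGen.refl
  | @tail b c hab h2 ih =>
    obtain ⟨α, hα, hq⟩ := h2
    refine ih.tail ⟨α, ?_⟩
    rw [q_coop_eq E Hs b H hH (hd b (lowReach_mem_ds hab)),
      if_pos ⟨rfl, rfl, hα⟩]
    exact hq

/-- Replace the high component of a cooperation. -/
def toH (Hs : Set Act) (H : Proc) : Proc → Proc
  | .coop a _ _ => .coop a Hs H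
  | X => X

lemma toH_coop (Hs : Set Act) (H a : Proc) (L : Set Act) (b : Proc) :
    toH Hs H (.coop a L b) = .coop a Hs H := rfl

lemma toH_mem (E : ℕ → Proc) (Hs : Set Act) (P H H' : Proc)
    (hH : curTypes E H ⊆ Hs) (hH' : curTypes E H' ⊆ Hs)
    (hd : ∀ P' ∈ ds E P, curTypes E P' ∩ curTypes E H = ∅)
    (hd' : ∀ P' ∈ ds E P, curTypes E P' ∩ curTypes E H' = ∅) :
    ∀ X ∈ ds E (.coop P Hs H), toH Hs H' X ∈ ds E (.coop P Hs H') := by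
  intro X hX
  obtain ⟨P', rfl, hD⟩ := ds_coop_char E Hs P H hH hd X hX
  exact mem_ds_coop E Hs P H' hH' hd' P' hD

lemma toH_inv (E : ℕ → Proc) (Hs : Set Act) (P H H' : Proc)
    (hH : curTypes E H ⊆ Hs)
    (hd : ∀ P' ∈ ds E P, curTypes E P' ∩ curTypes E H = ∅) :
    ∀ X ∈ ds E (.coop P Hs H), toH Hs H (toH Hs H' X) = X := by
  intro X hX
  obtain ⟨P', rfl, -⟩ := ds_coop_char E Hs P H hH hd X hX
  rfl


end PEPA

open PEPA

/-- **well-formedness of `P\ℋ`.** If `H̄₁` and `H̄₂` are high level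
components sharing no action type with any derivative of `P`, then the derivation
graphs of `P ⊲⊳_ℋ H̄₁` and `P ⊲⊳_ℋ H̄₂` are isomorphic: there is a bijection between
their derivative sets, mapping root to root, that preserves the transitions
together with their action types and (total conditional) rates. -/
theorem restr_well_formed (E : ℕ → Proc) (Hs : Set Act) (hτ : Act.tau ∉ Hs)
    (P H1 H2 : Proc) (hH1 : IsHighComp E Hs H1) (hH2 : IsHighComp E Hs H2)
    (hd1 : ∀ P' ∈ ds E P, curTypes E P' ∩ curTypes E H1 = ∅)
    (hd2 : ∀ P' ∈ ds E P, curTypes E P' ∩ curTypes E H2 = ∅) :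
    ∃ φ : ds E (Proc.coop P Hs H1) ≃ ds E (Proc.coop P Hs H2),
      (φ ⟨Proc.coop P Hs H1, Relation.ReflTransGen.refl⟩ : Proc) = Proc.coop P Hs H2 ∧
      ∀ (X Y : ds E (Proc.coop P Hs H1)) (α : Act),
        q E (X : Proc) α (Y : Proc) = q E (φ X : Proc) α (φ Y : Proc) := by
  have c1 : curTypes E H1 ⊆ Hs := hH1 H1 Relation.ReflTransGen.refl
  have c2 : curTypes E H2 ⊆ Hs := hH2 H2 Relation.ReflTransGen.refl
  refine ⟨⟨fun X => ⟨toH Hs H2 X.1, toH_mem E Hs P H1 H2 c1 c2 hd1 hd2 X.1 X.2⟩,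
      fun X => ⟨toH Hs H1 X.1, toH_mem E Hs P H2 H1 c2 c1 hd2 hd1 X.1 X.2⟩,
      fun X => Subtype.ext (toH_inv E Hs P H1 H2 c1 hd1 X.1 X.2),
      fun X => Subtype.ext (toH_inv E Hs P H2 H1 c2 hd2 X.1 X.2)⟩, rfl, ?_⟩
  intro X Y α
  obtain ⟨P1, hX, hD1⟩ := ds_coop_char E Hs P H1 c1 hd1 X.1 X.2
  obtain ⟨P2, hY, -⟩ := ds_coop_char E Hs P H1 c1 hd1 Y.1 Y.2
  have hP1 : P1 ∈ ds E P := lowReach_mem_ds hD1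
  show q E X.1 α Y.1 = q E (toH Hs H2 X.1) α (toH Hs H2 Y.1)
  rw [hX, hY, toH_coop, toH_coop,
    q_coop_eq E Hs P1 H1 c1 (hd1 P1 hP1) α P2 Hs H1,
    q_coop_eq E Hs P1 H2 c2 (hd2 P1 hP1) α P2 Hs H2]
  by_cases hα : α ∈ Hs <;> simp [hα]
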